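/- Let 𝔰𝔬₃ be the Lie algebra of skew-symmetric 3×3 real matrices, with bilinear form B x y := (1/2) * trace(x * y), and let e, f : ι → 𝔰𝔬₃ be B-dual bases (ι a finite type, (1/2) * trace((e i) * (f j)) = 1 if i = j and 0 otherwise). Then for all X, Y, Z ∈ ℝ³ (i.e. Fin 3 → ℝ): ∑ᵢ ((e i).mulVec X ⬝ᵥ Y) • ((f i).mulVec Z) = (Y ⬝ᵥ Z) • X − (X ⬝ᵥ Z) • Y, where ⬝ᵥ denotes the standard dot product on ℝ³. (Examples 5, 9, 10: the weight tensor of the standard representation of the holonomy algebra 𝔰𝔬₃ with the form ½Tr(xy) equals the curvature tensor R̂^{bd}_{ac} = δ^d_a δ^b_c − g_{ac} g^{bd} of the round unit three-sphere, explaining why the weight system of S³ coincides with that of the Yamada polynomial.) -/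

import Mathlib

open Matrix
open scoped Classical

def so3 : Submodule ℝ (Matrix (Fin 3) (Fin 3) ℝ) where
  carrier := {x | xᵀ = -x}
  add_mem' := by
    intro a b ha hb
    simp only [Set.mem_setOf_eq] at *
    rw [Matrix.transpose_add, ha, hb, neg_add]
  zero_mem' := by simp
  smul_mem' := by
    intro c a ha
    simp only [Set.mem_setOf_eq] at *
    rw [Matrix.transpose_smul, ha, smul_neg]

lemma sum_mulVec' {ι : Type*} (s : Finset ι) (M : ι → Matrix (Fin 3) (Fin 3) ℝ)
    (Z : Fin 3 → ℝ) : (∑ i ∈ s, M i) *ᵥ Z = ∑ i ∈ s, M i *ᵥ Z := by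
  induction s using Finset.cons_induction with
  | empty => simp [Matrix.zero_mulVec]
  | cons a s ha ih => rw [Finset.sum_cons, Finset.sum_cons, Matrix.add_mulVec, ih]

lemma so3_expand {ι : Type*} [Fintype ι] (e f : Module.Basis ι ℝ ↥so3)
    (hdual : ∀ i j, (1/2 : ℝ) * ((e i : Matrix (Fin 3) (Fin 3) ℝ)
        * (f j : Matrix (Fin 3) (Fin 3) ℝ)).trace = if i = j then 1 else 0)
    (x : ↥so3) :
    ∑ i, ((1/2 : ℝ) * ((e i : Matrix (Fin 3) (Fin 3) ℝ) * (x : Matrix (Fin 3) (Fin 3) ℝ)).trace) • f i = x := by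
  conv_rhs => rw [← f.sum_repr x]
  refine Finset.sum_congr rfl fun i _ => ?_
  congr 1
  conv_lhs => rw [← f.sum_repr x]
  push_cast [Matrix.mul_sum]
  simp only [Matrix.mul_smul, Matrix.trace_sum, Matrix.trace_smul, smul_eq_mul,
    Finset.mul_sum]
  rw [Finset.sum_congr rfl (fun j _ => by
    rw [mul_left_comm, hdual i j] : ∀ j ∈ Finset.univ,
      (1/2 : ℝ) * (f.repr x j * ((e i : Matrix (Fin 3) (Fin 3) ℝ)
        * (f j : Matrix (Fin 3) (Fin 3) ℝ)).trace)
      = f.repr x j * (if i = j then 1 else 0))]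
  simp [eq_comm]

lemma skew_pair (m : Matrix (Fin 3) (Fin 3) ℝ) (hm : mᵀ = -m) (X Y : Fin 3 → ℝ) :
    (1/2 : ℝ) * (m * (vecMulVec X Y - vecMulVec Y X)).trace = m.mulVec X ⬝ᵥ Y := by
  have hm' : ∀ p q, m q p = - m p q := fun p q => by
    have := congrFun (congrFun hm p) q
    simpa [Matrix.transpose_apply] using this
  have hS2 : (∑ p, ∑ q, m p q * (Y q * X p)) = ∑ p, ∑ q, -(m p q * (X q * Y p)) := by
    rw [Finset.sum_comm]
    refine Finset.sum_congr rfl fun p _ => Finset.sum_congr rfl fun q _ => ?_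
    rw [hm' p q]; ring
  have hL : (m * (vecMulVec X Y - vecMulVec Y X)).trace
      = (∑ p, ∑ q, m p q * (X q * Y p)) - (∑ p, ∑ q, m p q * (Y q * X p)) := by
    simp only [Matrix.trace, Matrix.diag, Matrix.mul_apply, Matrix.sub_apply,
      Matrix.vecMulVec_apply, mul_sub]
    rw [← Finset.sum_sub_distrib]
    refine Finset.sum_congr rfl fun p _ => ?_
    rw [← Finset.sum_sub_distrib]
  have hR : m.mulVec X ⬝ᵥ Y = ∑ p, ∑ q, m p q * (X q * Y p) := by
    simp only [dotProduct, Matrix.mulVec, Finset.sum_mul]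
    exact Finset.sum_congr rfl fun p _ => Finset.sum_congr rfl fun q _ => by ring
  rw [hL, hS2, hR]
  simp only [Finset.sum_neg_distrib]
  ring

theorem so3_weight_tensor_eq_sphere_curvature
    {ι : Type*} [Fintype ι]
    (e f : Module.Basis ι ℝ ↥so3)
    (hdual : ∀ i j, (1/2 : ℝ) * ((e i : Matrix (Fin 3) (Fin 3) ℝ)
        * (f j : Matrix (Fin 3) (Fin 3) ℝ)).trace = if i = j then 1 else 0)
    (X Y Z : Fin 3 → ℝ) :
    ∑ i, ((e i : Matrix (Fin 3) (Fin 3) ℝ).mulVec X ⬝ᵥ Y)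
        • ((f i : Matrix (Fin 3) (Fin 3) ℝ).mulVec Z)
      = (Y ⬝ᵥ Z) • X - (X ⬝ᵥ Z) • Y := by
  set w : Matrix (Fin 3) (Fin 3) ℝ := vecMulVec X Y - vecMulVec Y X with hw
  have hwmem : w ∈ so3 := by
    show wᵀ = -w
    ext p q
    simp [hw, Matrix.vecMulVec_apply]
    ring
  have key : ∑ i, ((1/2 : ℝ) * ((e i : Matrix (Fin 3) (Fin 3) ℝ) * w).trace) • f i = (⟨w, hwmem⟩ : ↥so3) :=
    so3_expand e f hdual ⟨w, hwmem⟩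
  have key' : ∑ i, ((1/2 : ℝ) * ((e i : Matrix (Fin 3) (Fin 3) ℝ) * w).trace) •
      (f i : Matrix (Fin 3) (Fin 3) ℝ) = w := by
    have := congrArg (Subtype.val) key
    push_cast at this
    simpa using this
  calc ∑ i, ((e i : Matrix (Fin 3) (Fin 3) ℝ).mulVec X ⬝ᵥ Y)
        • ((f i : Matrix (Fin 3) (Fin 3) ℝ).mulVec Z)
      = ∑ i, ((1/2 : ℝ) * ((e i : Matrix (Fin 3) (Fin 3) ℝ) * w).trace) •
        ((f i : Matrix (Fin 3) (Fin 3) ℝ).mulVec Z) := by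
        refine Finset.sum_congr rfl fun i _ => ?_
        rw [skew_pair _ (e i).2 X Y]
    _ = (∑ i, ((1/2 : ℝ) * ((e i : Matrix (Fin 3) (Fin 3) ℝ) * w).trace) •
        (f i : Matrix (Fin 3) (Fin 3) ℝ)) *ᵥ Z := by
        rw [sum_mulVec']
        refine Finset.sum_congr rfl fun i _ => ?_
        rw [Matrix.smul_mulVec]
    _ = w *ᵥ Z := by rw [key']
    _ = (Y ⬝ᵥ Z) • X - (X ⬝ᵥ Z) • Y := by
        funext p
        simp only [hw, Matrix.mulVec, dotProduct, Pi.sub_apply, Pi.smul_apply,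
          smul_eq_mul, Matrix.sub_apply, Matrix.vecMulVec_apply, Finset.sum_mul]
        rw [← Finset.sum_sub_distrib]
        refine Finset.sum_congr rfl fun q _ => ?_
        ring
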